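/- arXiv:1509.00126 — 3 statements merged into one kernel-verified Lean document; each statement's English description precedes it below -/
import Mathlib

section
/- Theorem 2(c): If (1−δ)·f_α > c > (1−δ)·(f_α+f_β)/2 and (1+δ(n_α−1))·f_α + (1+δ(n_α+n_β−2))·f_β > 2c, then a network g is strongly efficient if and only if there exists a type-α agent i₀ ∈ A such that the edge set of g consists of all pairs of distinct type-α agents together with the pairs {i₀, j} for every type-β agent j ∈ B (in particular, no two type-β agents are linked and every type-β agent is linked only to i₀). -/
open Finset

noncomputable section

open scoped Classical

variable {I : Type*}

/-- Benefit function of the two-type connections model: a connection to a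
type-α agent (a member of `A`) yields `fα`, a connection to a type-β agent
yields `fβ` (before spatial discounting). -/
def fTheta [DecidableEq I] (A : Finset I) (fα fβ : ℝ) (j : I) : ℝ :=
  if j ∈ A then fα else fβ

/-- One-period payoff of agent `i` in network `g`:
`u_i(g) = Σ_{j ≠ i reachable from i} δ^(d_g(i,j)-1) f(θ_j) − deg_g(i)·c`. -/
def payoff [Fintype I] (f : I → ℝ) (c δ : ℝ) (g : SimpleGraph I) (i : I) : ℝ :=
  (∑ j ∈ univ.filter fun j => j ≠ i ∧ g.Reachable i j, δ ^ (g.dist i j - 1) * f j)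
    - ((univ.filter fun j => g.Adj i j).card : ℝ) * c

/-- Total one-period payoff `ν(g) = Σ_i u_i(g)`. -/
def totalPayoff [Fintype I] (f : I → ℝ) (c δ : ℝ) (g : SimpleGraph I) : ℝ :=
  ∑ i, payoff f c δ g i

/-- A network is strongly efficient if it maximizes the total payoff. -/
def StronglyEfficient [Fintype I] (f : I → ℝ) (c δ : ℝ) (g : SimpleGraph I) : Prop :=
  ∀ g' : SimpleGraph I, totalPayoff f c δ g' ≤ totalPayoff f c δ g

/-- A network `g` is core-stable if no subgroup `I'` of agents, together with a
network `g'` all of whose links are inside `I'`, gives every member of `I'` a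
weakly higher payoff and some member a strictly higher payoff. -/
def CoreStable [Fintype I] (f : I → ℝ) (c δ : ℝ) (g : SimpleGraph I) : Prop :=
  ¬ ∃ (I' : Finset I) (g' : SimpleGraph I),
      (∀ i j : I, g'.Adj i j → i ∈ I' ∧ j ∈ I') ∧
      (∀ i ∈ I', payoff f c δ g i ≤ payoff f c δ g' i) ∧
      (∃ i ∈ I', payoff f c δ g i < payoff f c δ g' i)

/-- The network whose links are exactly the pairs with at least one endpoint in `A`. -/
def withCore (A : Finset I) : SimpleGraph I where
  Adj i j := i ≠ j ∧ (i ∈ A ∨ j ∈ A)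
  symm := ⟨fun i j h => ⟨h.1.symm, h.2.symm⟩⟩
  loopless := ⟨fun i h => h.1 rfl⟩

/-- The clique on `A`: exactly all pairs of distinct members of `A` are linked. -/
def cliqueOn (A : Finset I) : SimpleGraph I where
  Adj i j := i ≠ j ∧ i ∈ A ∧ j ∈ A
  symm := ⟨fun i j h => ⟨h.1.symm, h.2.2, h.2.1⟩⟩
  loopless := ⟨fun i h => h.1 rfl⟩

/-- Clique on `A` together with the links `{i₀, j}` for every agent `j ∉ A`. -/
def coreStar (A : Finset I) (i₀ : I) : SimpleGraph I where
  Adj i j := i ≠ j ∧ ((i ∈ A ∧ j ∈ A) ∨ (i = i₀ ∧ j ∉ A) ∨ (j = i₀ ∧ i ∉ A))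
  symm := by
    refine ⟨?_⟩
    rintro i j ⟨hne, h⟩
    refine ⟨hne.symm, ?_⟩
    rcases h with h | h | h
    · exact Or.inl ⟨h.2, h.1⟩
    · exact Or.inr (Or.inr h)
    · exact Or.inr (Or.inl h)
  loopless := ⟨fun i h => h.1 rfl⟩

/-- The star on all agents centered at `i₀`. -/
def starAll (i₀ : I) : SimpleGraph I where
  Adj i j := i ≠ j ∧ (i = i₀ ∨ j = i₀)
  symm := ⟨fun i j h => ⟨h.1.symm, h.2.symm⟩⟩
  loopless := ⟨fun i h => h.1 rfl⟩

/-- The star on the agents in `A`, centered at `i₀`. -/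
def starOn (A : Finset I) (i₀ : I) : SimpleGraph I where
  Adj i j := i ≠ j ∧ (i = i₀ ∨ j = i₀) ∧ i ∈ A ∧ j ∈ A
  symm := ⟨fun i j h => ⟨h.1.symm, h.2.1.symm, h.2.2.2, h.2.2.1⟩⟩
  loopless := ⟨fun i h => h.1 rfl⟩

/-! ### Auxiliary machinery for Theorem 2(c) -/

section Thm2cAux

variable {I : Type*} [Fintype I] [DecidableEq I]

/-- Per-ordered-pair value occurring in the payoff. -/
private def qval (f : I → ℝ) (c δ : ℝ) (g : SimpleGraph I) (i j : I) : ℝ :=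
  (if j ≠ i ∧ g.Reachable i j then δ ^ (g.dist i j - 1) * f j else 0)
    - (if g.Adj i j then c else 0)

/-- Symmetrized per-ordered-pair value. -/
private def sval (f : I → ℝ) (c δ : ℝ) (g : SimpleGraph I) (i j : I) : ℝ :=
  (if i ≠ j ∧ g.Reachable i j then δ ^ (g.dist i j - 1) * ((f i + f j) / 2) else 0)
    - (if g.Adj i j then c else 0)

private lemma payoff_eq (f : I → ℝ) (c δ : ℝ) (g : SimpleGraph I) (i : I) :
    payoff f c δ g i = ∑ j, qval f c δ g i j := by
  unfold payoff qval
  rw [Finset.sum_sub_distrib]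
  congr 1
  · rw [Finset.sum_filter]
    exact Finset.sum_congr rfl fun x _ => by congr
  · rw [← Finset.sum_filter, Finset.sum_const, nsmul_eq_mul]

private lemma sval_comm (f : I → ℝ) (c δ : ℝ) (g : SimpleGraph I) (i j : I) :
    sval f c δ g i j = sval f c δ g j i := by
  unfold sval
  have h1 : (i ≠ j ∧ g.Reachable i j) ↔ (j ≠ i ∧ g.Reachable j i) :=
    ⟨fun h => ⟨h.1.symm, h.2.symm⟩, fun h => ⟨h.1.symm, h.2.symm⟩⟩
  rw [SimpleGraph.dist_comm (u := i) (v := j), add_comm (f i) (f j), g.adj_comm i j]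
  congr 1
  exact if_congr h1 rfl rfl

private lemma qval_add (f : I → ℝ) (c δ : ℝ) (g : SimpleGraph I) (i j : I) :
    qval f c δ g i j + qval f c δ g j i = 2 * sval f c δ g i j := by
  unfold qval sval
  by_cases hij : i = j
  · subst hij
    simp
  · rw [SimpleGraph.dist_comm (u := j) (v := i)]
    by_cases hr : g.Reachable i j
    · rw [if_pos (show j ≠ i ∧ g.Reachable i j from ⟨fun h => hij h.symm, hr⟩),
        if_pos (show i ≠ j ∧ g.Reachable j i from ⟨hij, hr.symm⟩),
        if_pos (show i ≠ j ∧ g.Reachable i j from ⟨hij, hr⟩)]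
      by_cases ha : g.Adj i j
      · rw [if_pos ha, if_pos (show g.Adj j i from ha.symm)]; ring
      · rw [if_neg ha, if_neg (show ¬ g.Adj j i from fun h => ha h.symm)]; ring
    · have ha : ¬ g.Adj i j := fun h => hr h.reachable
      rw [if_neg (show ¬ (j ≠ i ∧ g.Reachable i j) from fun h => hr h.2),
        if_neg (show ¬ (i ≠ j ∧ g.Reachable j i) from fun h => hr h.2.symm),
        if_neg (show ¬ (i ≠ j ∧ g.Reachable i j) from fun h => hr h.2),
        if_neg ha, if_neg (show ¬ g.Adj j i from fun h => ha h.symm)]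
      ring

private lemma totalPayoff_eq (f : I → ℝ) (c δ : ℝ) (g : SimpleGraph I) :
    totalPayoff f c δ g = ∑ i, ∑ j, sval f c δ g i j := by
  have h1 : totalPayoff f c δ g = ∑ i, ∑ j, qval f c δ g i j :=
    Finset.sum_congr rfl fun i _ => payoff_eq f c δ g i
  have h2 : (∑ i, ∑ j, qval f c δ g i j) = ∑ i, ∑ j, qval f c δ g j i := Finset.sum_comm
  have h4 : (∑ i, ∑ j, qval f c δ g i j) + (∑ i, ∑ j, qval f c δ g j i)
      = ∑ i, ∑ j, 2 * sval f c δ g i j := by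
    rw [← Finset.sum_add_distrib]
    refine Finset.sum_congr rfl fun i _ => ?_
    rw [← Finset.sum_add_distrib]
    exact Finset.sum_congr rfl fun j _ => qval_add f c δ g i j
  have h5 : (∑ i, ∑ j, 2 * sval f c δ g i j) = 2 * ∑ i, ∑ j, sval f c δ g i j := by
    rw [Finset.mul_sum]
    exact Finset.sum_congr rfl fun i _ => (Finset.mul_sum _ _ _).symm
  rw [← h2] at h4
  rw [h5] at h4
  linarith

/-- The per-`β`-agent block of the decomposition. -/
private def psiSum (A : Finset I) (f : I → ℝ) (c δ : ℝ) (g : SimpleGraph I) (b : I) : ℝ :=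
  2 * (∑ a ∈ A, sval f c δ g a b) + ∑ b' ∈ Aᶜ, sval f c δ g b b'

private lemma totalPayoff_decomp (A : Finset I) (f : I → ℝ) (c δ : ℝ) (g : SimpleGraph I) :
    totalPayoff f c δ g
      = (∑ a ∈ A, ∑ a' ∈ A, sval f c δ g a a') + ∑ b ∈ Aᶜ, psiSum A f c δ g b := by
  rw [totalPayoff_eq]
  have hsplit : ∀ F : I → ℝ, (∑ j, F j) = (∑ j ∈ A, F j) + ∑ j ∈ Aᶜ, F j :=
    fun F => (Finset.sum_add_sum_compl A F).symm
  rw [hsplit (fun i => ∑ j, sval f c δ g i j)]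
  have hA : (∑ i ∈ A, ∑ j, sval f c δ g i j)
      = (∑ i ∈ A, ∑ j ∈ A, sval f c δ g i j) + ∑ i ∈ A, ∑ j ∈ Aᶜ, sval f c δ g i j := by
    rw [← Finset.sum_add_distrib]
    exact Finset.sum_congr rfl fun i _ => hsplit _
  have hB : (∑ i ∈ Aᶜ, ∑ j, sval f c δ g i j)
      = (∑ i ∈ Aᶜ, ∑ j ∈ A, sval f c δ g i j) + ∑ i ∈ Aᶜ, ∑ j ∈ Aᶜ, sval f c δ g i j := by
    rw [← Finset.sum_add_distrib]
    exact Finset.sum_congr rfl fun i _ => hsplit _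
  rw [hA, hB]
  have hAB : (∑ i ∈ A, ∑ j ∈ Aᶜ, sval f c δ g i j)
      = ∑ b ∈ Aᶜ, ∑ a ∈ A, sval f c δ g a b := Finset.sum_comm
  have hBA : (∑ i ∈ Aᶜ, ∑ j ∈ A, sval f c δ g i j)
      = ∑ b ∈ Aᶜ, ∑ a ∈ A, sval f c δ g a b :=
    Finset.sum_congr rfl fun b _ => Finset.sum_congr rfl fun a _ => sval_comm f c δ g b a
  rw [hAB, hBA]
  unfold psiSum
  rw [Finset.sum_add_distrib]
  have h2 : (∑ b ∈ Aᶜ, 2 * ∑ a ∈ A, sval f c δ g a b)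
      = 2 * ∑ b ∈ Aᶜ, ∑ a ∈ A, sval f c δ g a b := by
    rw [Finset.mul_sum]
  rw [h2]
  ring

private lemma sval_diag (f : I → ℝ) (c δ : ℝ) (g : SimpleGraph I) (i : I) :
    sval f c δ g i i = 0 := by
  unfold sval
  simp

private lemma sval_of_adj (f : I → ℝ) (c δ : ℝ) {g : SimpleGraph I} {i j : I} (h : g.Adj i j) :
    sval f c δ g i j = (f i + f j) / 2 - c := by
  unfold sval
  rw [if_pos (show i ≠ j ∧ g.Reachable i j from ⟨h.ne, h.reachable⟩), if_pos h,
    SimpleGraph.dist_eq_one_iff_adj.mpr h]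
  norm_num

private lemma sval_of_not_reachable (f : I → ℝ) (c δ : ℝ) {g : SimpleGraph I} {i j : I}
    (h : ¬ g.Reachable i j) : sval f c δ g i j = 0 := by
  unfold sval
  rw [if_neg (show ¬ (i ≠ j ∧ g.Reachable i j) from fun hc => h hc.2),
    if_neg (show ¬ g.Adj i j from fun hc => h hc.reachable)]
  ring

private lemma two_le_dist {g : SimpleGraph I} {i j : I} (hij : i ≠ j) (hna : ¬ g.Adj i j)
    (hr : g.Reachable i j) : 2 ≤ g.dist i j := by
  have h0 : 0 < g.dist i j := hr.pos_dist_of_ne hij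
  have h1 : g.dist i j ≠ 1 := fun h => hna (SimpleGraph.dist_eq_one_iff_adj.mp h)
  omega

private lemma sval_of_dist_two (f : I → ℝ) (c δ : ℝ) {g : SimpleGraph I} {i j : I}
    (hij : i ≠ j) (hna : ¬ g.Adj i j) (hr : g.Reachable i j) (h2 : g.dist i j = 2) :
    sval f c δ g i j = δ * ((f i + f j) / 2) := by
  unfold sval
  rw [if_pos (show i ≠ j ∧ g.Reachable i j from ⟨hij, hr⟩), if_neg hna, h2]
  norm_num

private lemma sval_le_of_not_adj {g : SimpleGraph I} {i j : I} {f : I → ℝ} {c δ : ℝ}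
    (hδ0 : 0 < δ) (hδ1 : δ < 1) (hF : 0 < (f i + f j) / 2) (hna : ¬ g.Adj i j) :
    sval f c δ g i j ≤ δ * ((f i + f j) / 2) := by
  unfold sval
  rw [if_neg hna, sub_zero]
  split_ifs with h
  · obtain ⟨hij, hr⟩ := h
    have h2 : 2 ≤ g.dist i j := two_le_dist hij hna hr
    have hp : δ ^ (g.dist i j - 1) ≤ δ ^ 1 :=
      pow_le_pow_of_le_one hδ0.le hδ1.le (by omega)
    rw [pow_one] at hp
    exact mul_le_mul_of_nonneg_right hp hF.le
  · positivity

private lemma dist_two_of_sval_eq {g : SimpleGraph I} {i j : I} {f : I → ℝ} {c δ : ℝ}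
    (hδ0 : 0 < δ) (hδ1 : δ < 1) (hF : 0 < (f i + f j) / 2) (hij : i ≠ j) (hna : ¬ g.Adj i j)
    (heq : sval f c δ g i j = δ * ((f i + f j) / 2)) :
    g.Reachable i j ∧ g.dist i j = 2 := by
  by_cases hr : g.Reachable i j
  · refine ⟨hr, ?_⟩
    have h2 : 2 ≤ g.dist i j := two_le_dist hij hna hr
    by_contra hne
    have hp : δ ^ (g.dist i j - 1) < δ ^ 1 :=
      pow_lt_pow_right_of_lt_one₀ hδ0 hδ1 (by omega)
    rw [pow_one] at hp
    have hs : sval f c δ g i j = δ ^ (g.dist i j - 1) * ((f i + f j) / 2) := by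
      unfold sval
      rw [if_pos (show i ≠ j ∧ g.Reachable i j from ⟨hij, hr⟩), if_neg hna, sub_zero]
    rw [hs] at heq
    nlinarith
  · rw [sval_of_not_reachable f c δ hr] at heq
    nlinarith [mul_pos hδ0 hF]

private lemma eq_of_reachable_isolated {g : SimpleGraph I} {b : I}
    (h : ∀ x, ¬ g.Adj b x) {j : I} (hr : g.Reachable b j) : b = j := by
  obtain ⟨p⟩ := hr
  cases p with
  | nil => rfl
  | cons ha _ => exact absurd ha (h _)

private lemma exists_mid_of_dist_two {g : SimpleGraph I} {i j : I}
    (hr : g.Reachable i j) (h2 : g.dist i j = 2) :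
    ∃ x, g.Adj i x ∧ g.Adj x j := by
  obtain ⟨p, hp⟩ := hr.exists_walk_length_eq_dist
  rw [h2] at hp
  cases p with
  | nil => simp at hp
  | cons ha q =>
    cases q with
    | nil => simp at hp
    | cons hb r =>
      cases r with
      | nil => exact ⟨_, ha, hb⟩
      | cons hc s => simp [SimpleGraph.Walk.length_cons] at hp

private lemma sum_ite_const (s : Finset I) (P : I → Prop) (r : ℝ) :
    (∑ x ∈ s, if P x then r else 0) = ((s.filter P).card : ℝ) * r := by
  rw [← Finset.sum_filter, Finset.sum_const, nsmul_eq_mul]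

private lemma sum_ite_ne (s : Finset I) {b : I} (hb : b ∈ s) (x : ℝ) :
    (∑ j ∈ s, if b = j then 0 else x) = ((s.card : ℝ) - 1) * x := by
  have h : (∑ j ∈ s, if b = j then 0 else x)
      = (∑ j ∈ s, x) - ∑ j ∈ s, if b = j then x else 0 := by
    rw [← Finset.sum_sub_distrib]
    exact Finset.sum_congr rfl fun j _ => by split_ifs <;> ring
  rw [h, Finset.sum_const, Finset.sum_ite_eq, if_pos hb, nsmul_eq_mul]
  ring

private lemma sum_sum_offdiag (s : Finset I) (x : ℝ) :
    (∑ i ∈ s, ∑ j ∈ s, if i = j then 0 else x) = (s.card : ℝ) * ((s.card : ℝ) - 1) * x := by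
  rw [Finset.sum_congr rfl (fun i hi => sum_ite_ne s hi x), Finset.sum_const, nsmul_eq_mul]
  ring

/-- The optimal total payoff. -/
private def Tval (A : Finset I) (fα fβ c δ : ℝ) : ℝ :=
  (A.card : ℝ) * ((A.card : ℝ) - 1) * (fα - c)
    + (Aᶜ.card : ℝ) *
      (2 * ((A.card : ℝ) * (δ * ((fα + fβ) / 2)) - (c - (1 - δ) * ((fα + fβ) / 2)))
        + ((Aᶜ.card : ℝ) - 1) * (δ * fβ))

private lemma coreStar_adj_iff (A : Finset I) (i₀ : I) (i j : I) :
    (coreStar A i₀).Adj i j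
      ↔ i ≠ j ∧ ((i ∈ A ∧ j ∈ A) ∨ (i = i₀ ∧ j ∉ A) ∨ (j = i₀ ∧ i ∉ A)) := Iff.rfl

private lemma coreStar_adj_of_ne {A : Finset I} {i₀ : I} (hi₀ : i₀ ∈ A) {x : I}
    (hx : x ≠ i₀) : (coreStar A i₀).Adj i₀ x := by
  rw [coreStar_adj_iff]
  by_cases hxA : x ∈ A
  · exact ⟨fun h => hx h.symm, Or.inl ⟨hi₀, hxA⟩⟩
  · exact ⟨fun h => hx h.symm, Or.inr (Or.inl ⟨rfl, hxA⟩)⟩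

private lemma coreStar_not_adj_AB {A : Finset I} {i₀ : I} {a b : I} (ha : a ∈ A) (hb : b ∉ A)
    (hai : a ≠ i₀) : ¬ (coreStar A i₀).Adj a b := by
  rw [coreStar_adj_iff]
  rintro ⟨hne, (⟨h1, h2⟩ | ⟨h1, h2⟩ | ⟨h1, h2⟩)⟩
  · exact hb h2
  · exact hai h1
  · exact h2 ha

private lemma coreStar_not_adj_BB {A : Finset I} {i₀ : I} (hi₀ : i₀ ∈ A) {b b' : I}
    (hb : b ∉ A) (hb' : b' ∉ A) : ¬ (coreStar A i₀).Adj b b' := by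
  rw [coreStar_adj_iff]
  rintro ⟨hne, (⟨h1, h2⟩ | ⟨h1, h2⟩ | ⟨h1, h2⟩)⟩
  · exact hb h1
  · exact hb (h1 ▸ hi₀)
  · exact hb' (h1 ▸ hi₀)

private lemma coreStar_dist_two {A : Finset I} {i₀ : I} (hi₀ : i₀ ∈ A) {i j : I}
    (hij : i ≠ j) (hna : ¬ (coreStar A i₀).Adj i j) :
    (coreStar A i₀).Reachable i j ∧ (coreStar A i₀).dist i j = 2 := by
  have hii : i ≠ i₀ := by
    rintro rfl
    exact hna (coreStar_adj_of_ne hi₀ (fun h => hij h.symm))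
  have hjj : j ≠ i₀ := by
    rintro rfl
    exact hna ((coreStar_adj_of_ne hi₀ hii).symm)
  have hr : (coreStar A i₀).Reachable i j :=
    ⟨SimpleGraph.Walk.cons ((coreStar_adj_of_ne hi₀ hii).symm)
      (SimpleGraph.Walk.cons (coreStar_adj_of_ne hi₀ hjj) SimpleGraph.Walk.nil)⟩
  refine ⟨hr, le_antisymm ?_ (two_le_dist hij hna hr)⟩
  have hw := SimpleGraph.dist_le (SimpleGraph.Walk.cons ((coreStar_adj_of_ne hi₀ hii).symm)
      (SimpleGraph.Walk.cons (coreStar_adj_of_ne hi₀ hjj) SimpleGraph.Walk.nil))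
  simpa using hw

private lemma coreStar_totalPayoff (A : Finset I) (fα fβ c δ : ℝ) {i₀ : I} (hi₀ : i₀ ∈ A) :
    totalPayoff (fTheta A fα fβ) c δ (coreStar A i₀) = Tval A fα fβ c δ := by
  set f := fTheta A fα fβ with hf
  have hfa : ∀ a ∈ A, f a = fα := fun a ha => if_pos ha
  have hfb : ∀ b ∈ Aᶜ, f b = fβ := fun b hb => if_neg (Finset.mem_compl.mp hb)
  rw [totalPayoff_decomp A]
  have hAA : (∑ a ∈ A, ∑ a' ∈ A, sval f c δ (coreStar A i₀) a a')
      = (A.card : ℝ) * ((A.card : ℝ) - 1) * (fα - c) := by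
    rw [← sum_sum_offdiag A (fα - c)]
    refine Finset.sum_congr rfl fun a ha => Finset.sum_congr rfl fun a' ha' => ?_
    by_cases he : a = a'
    · rw [if_pos he, he, sval_diag]
    · rw [if_neg he,
        sval_of_adj f c δ (show (coreStar A i₀).Adj a a' from ⟨he, Or.inl ⟨ha, ha'⟩⟩),
        hfa a ha, hfa a' ha']
      ring
  have hpsi : ∀ b ∈ Aᶜ, psiSum A f c δ (coreStar A i₀) b
      = 2 * ((A.card : ℝ) * (δ * ((fα + fβ) / 2)) - (c - (1 - δ) * ((fα + fβ) / 2)))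
        + ((Aᶜ.card : ℝ) - 1) * (δ * fβ) := by
    intro b hb
    have hbA : b ∉ A := Finset.mem_compl.mp hb
    have hSa : (∑ a ∈ A, sval f c δ (coreStar A i₀) a b)
        = (A.card : ℝ) * (δ * ((fα + fβ) / 2)) - (c - (1 - δ) * ((fα + fβ) / 2)) := by
      have hpt : ∀ a ∈ A, sval f c δ (coreStar A i₀) a b
          = δ * ((fα + fβ) / 2)
            - (if a = i₀ then (c - (1 - δ) * ((fα + fβ) / 2)) else 0) := by
        intro a ha
        have hab : a ≠ b := fun h => hbA (h ▸ ha)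
        by_cases hai : a = i₀
        · subst hai
          have hbi : b ≠ a := fun h => hbA (h ▸ ha)
          rw [if_pos rfl, sval_of_adj f c δ (coreStar_adj_of_ne hi₀ hbi),
            hfa a ha, hfb b hb]
          ring
        · rw [if_neg hai, sub_zero]
          have hna := coreStar_not_adj_AB ha hbA hai
          obtain ⟨hr, hd⟩ := coreStar_dist_two hi₀ hab hna
          rw [sval_of_dist_two f c δ hab hna hr hd, hfa a ha, hfb b hb]
      rw [Finset.sum_congr rfl hpt, Finset.sum_sub_distrib, Finset.sum_const, nsmul_eq_mul,
        Finset.sum_ite_eq' A i₀ (fun _ => c - (1 - δ) * ((fα + fβ) / 2)), if_pos hi₀]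
    have hSb : (∑ b' ∈ Aᶜ, sval f c δ (coreStar A i₀) b b')
        = ((Aᶜ.card : ℝ) - 1) * (δ * fβ) := by
      have hpt : ∀ b' ∈ Aᶜ, sval f c δ (coreStar A i₀) b b'
          = if b = b' then 0 else δ * fβ := by
        intro b' hb'
        by_cases he : b = b'
        · rw [if_pos he, ← he, sval_diag]
        · rw [if_neg he]
          have hna := coreStar_not_adj_BB hi₀ hbA (Finset.mem_compl.mp hb')
          obtain ⟨hr, hd⟩ := coreStar_dist_two hi₀ he hna
          rw [sval_of_dist_two f c δ he hna hr hd, hfb b hb, hfb b' hb']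
          ring
      rw [Finset.sum_congr rfl hpt, sum_ite_ne Aᶜ hb (δ * fβ)]
    unfold psiSum
    rw [hSa, hSb]
  rw [hAA, Finset.sum_congr rfl hpsi, Finset.sum_const, nsmul_eq_mul]
  unfold Tval
  ring

set_option maxHeartbeats 2000000 in
private lemma key_bound (A : Finset I) (fα fβ c δ : ℝ)
    (hA : 1 ≤ A.card) (hB : 1 ≤ Aᶜ.card)
    (hfαβ : fβ < fα) (hfβ : 0 < fβ)
    (hδ0 : 0 < δ) (hδ1 : δ < 1)
    (h1 : (1 - δ) * fα > c) (h2 : c > (1 - δ) * ((fα + fβ) / 2))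
    (h3 : (1 + δ * ((A.card : ℝ) - 1)) * fα
        + (1 + δ * ((A.card : ℝ) + (Aᶜ.card : ℝ) - 2)) * fβ > 2 * c)
    (g : SimpleGraph I) :
    totalPayoff (fTheta A fα fβ) c δ g ≤ Tval A fα fβ c δ ∧
      (totalPayoff (fTheta A fα fβ) c δ g = Tval A fα fβ c δ →
        ∃ i₀ ∈ A, g = coreStar A i₀) := by
  set f := fTheta A fα fβ with hf
  have hfa : ∀ a ∈ A, f a = fα := fun a ha => if_pos ha
  have hfb : ∀ b ∈ Aᶜ, f b = fβ := fun b hb => if_neg (Finset.mem_compl.mp hb)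
  set F := (fα + fβ) / 2 with hFdef
  set Lab := c - (1 - δ) * F with hLabdef
  set Lbb := c - (1 - δ) * fβ with hLbbdef
  have hfα : 0 < fα := hfβ.trans hfαβ
  have hF : 0 < F := by rw [hFdef]; linarith
  have hLab : 0 < Lab := by rw [hLabdef]; linarith
  have hLabLbb : 2 * Lab < Lbb := by
    rw [hLabdef, hLbbdef, hFdef]; nlinarith [h1]
  have hLbb0 : 0 < Lbb := by linarith
  have hdαβ : δ * fα < fα - c := by nlinarith [h1]
  set nα := (A.card : ℝ) with hnα
  set nβ := (Aᶜ.card : ℝ) with hnβ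
  set ψstar := 2 * (nα * (δ * F) - Lab) + (nβ - 1) * (δ * fβ) with hψdef
  have hψpos : 0 < ψstar := by
    have hid : ψstar = (1 + δ * (nα - 1)) * fα + (1 + δ * (nα + nβ - 2)) * fβ - 2 * c := by
      rw [hψdef, hLabdef, hFdef]; ring
    rw [hid]; linarith [h3]
  -- pairwise bounds
  have hAAle : ∀ a ∈ A, ∀ a' ∈ A, sval f c δ g a a' ≤ (if a = a' then 0 else fα - c) := by
    intro a ha a' ha'
    by_cases he : a = a'
    · rw [if_pos he, he, sval_diag]
    · rw [if_neg he]
      by_cases hadj : g.Adj a a'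
      · rw [sval_of_adj f c δ hadj, hfa a ha, hfa a' ha']
        apply le_of_eq; ring
      · have hFaa : 0 < (f a + f a') / 2 := by rw [hfa a ha, hfa a' ha']; linarith
        have hle := sval_le_of_not_adj (f := f) (c := c) hδ0 hδ1 hFaa hadj
        rw [hfa a ha, hfa a' ha'] at hle
        have hle2 : δ * ((fα + fα) / 2) = δ * fα := by ring
        rw [hle2] at hle
        linarith [hdαβ]
  have hAAeq : ∀ a ∈ A, ∀ a' ∈ A, a ≠ a' → sval f c δ g a a' = fα - c → g.Adj a a' := by
    intro a ha a' ha' hne heq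
    by_contra hadj
    have hFaa : 0 < (f a + f a') / 2 := by rw [hfa a ha, hfa a' ha']; linarith
    have hle := sval_le_of_not_adj (f := f) (c := c) hδ0 hδ1 hFaa hadj
    rw [hfa a ha, hfa a' ha'] at hle
    have hle2 : δ * ((fα + fα) / 2) = δ * fα := by ring
    rw [hle2] at hle
    linarith [hdαβ]
  have hABle : ∀ b ∈ Aᶜ, ∀ a ∈ A,
      sval f c δ g a b ≤ δ * F - (if g.Adj a b then Lab else 0) := by
    intro b hb a ha
    have hfab : (f a + f b) / 2 = F := by rw [hfa a ha, hfb b hb, hFdef]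
    by_cases hadj : g.Adj a b
    · rw [if_pos hadj, sval_of_adj f c δ hadj, hfab, hLabdef]
      apply le_of_eq; ring
    · rw [if_neg hadj, sub_zero]
      have hle := sval_le_of_not_adj (f := f) (c := c) hδ0 hδ1 (by rw [hfab]; exact hF) hadj
      rwa [hfab] at hle
  have hBBle : ∀ b ∈ Aᶜ, ∀ b' ∈ Aᶜ,
      sval f c δ g b b' ≤ (if b = b' then 0 else δ * fβ) - (if g.Adj b b' then Lbb else 0) := by
    intro b hb b' hb'
    by_cases he : b = b'
    · rw [if_pos he, he, sval_diag, if_neg (g.loopless.irrefl b')]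
      norm_num
    · rw [if_neg he]
      have hfbb : (f b + f b') / 2 = fβ := by rw [hfb b hb, hfb b' hb']; ring
      by_cases hadj : g.Adj b b'
      · rw [if_pos hadj, sval_of_adj f c δ hadj, hfbb, hLbbdef]
        apply le_of_eq; ring
      · rw [if_neg hadj, sub_zero]
        have hle := sval_le_of_not_adj (f := f) (c := c) hδ0 hδ1 (by rw [hfbb]; exact hfβ) hadj
        rwa [hfbb] at hle
  -- neighbour counts
  set kA : I → ℕ := fun b => (A.filter (fun a => g.Adj a b)).card with hkA
  set kB : I → ℕ := fun b => (Aᶜ.filter (fun b' => g.Adj b b')).card with hkB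
  have hSaB : ∀ b : I, (∑ a ∈ A, (δ * F - if g.Adj a b then Lab else 0))
      = nα * (δ * F) - (kA b : ℝ) * Lab := by
    intro b
    rw [Finset.sum_sub_distrib, Finset.sum_const, nsmul_eq_mul,
      sum_ite_const A (fun a => g.Adj a b) Lab]
  have hSbB : ∀ b ∈ Aᶜ,
      (∑ b' ∈ Aᶜ, ((if b = b' then 0 else δ * fβ) - if g.Adj b b' then Lbb else 0))
      = (nβ - 1) * (δ * fβ) - (kB b : ℝ) * Lbb := by
    intro b hb
    rw [Finset.sum_sub_distrib, sum_ite_ne Aᶜ hb (δ * fβ),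
      sum_ite_const Aᶜ (fun b' => g.Adj b b') Lbb]
  have hψiso : ∀ b ∈ Aᶜ, kA b = 0 → kB b = 0 → psiSum A f c δ g b = 0 := by
    intro b hb h0A h0B
    have hnoadj : ∀ x, ¬ g.Adj b x := by
      intro x hx
      by_cases hxA : x ∈ A
      · have hmem : x ∈ A.filter (fun a => g.Adj a b) :=
          Finset.mem_filter.mpr ⟨hxA, hx.symm⟩
        rw [Finset.card_eq_zero.mp h0A] at hmem
        simp at hmem
      · have hmem : x ∈ Aᶜ.filter (fun b' => g.Adj b b') :=
          Finset.mem_filter.mpr ⟨Finset.mem_compl.mpr hxA, hx⟩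
        rw [Finset.card_eq_zero.mp h0B] at hmem
        simp at hmem
    have hz1 : ∀ a ∈ A, sval f c δ g a b = 0 := by
      intro a ha
      apply sval_of_not_reachable
      intro hr
      have hba := eq_of_reachable_isolated hnoadj hr.symm
      exact (Finset.mem_compl.mp hb) (hba ▸ ha)
    have hz2 : ∀ b' ∈ Aᶜ, sval f c δ g b b' = 0 := by
      intro b' _
      by_cases he : b = b'
      · rw [← he]; exact sval_diag f c δ g b
      · exact sval_of_not_reachable f c δ fun hr => he (eq_of_reachable_isolated hnoadj hr)
    unfold psiSum
    rw [Finset.sum_congr rfl hz1, Finset.sum_congr rfl hz2]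
    simp
  have hcreditAll : ∀ b : I, ¬ (kA b = 0 ∧ kB b = 0) →
      2 * Lab ≤ 2 * (kA b : ℝ) * Lab + (kB b : ℝ) * Lbb := by
    intro b hniso
    rcases Nat.eq_zero_or_pos (kA b) with h | h
    · have hkB1 : 1 ≤ kB b := by
        rcases Nat.eq_zero_or_pos (kB b) with h' | h'
        · exact absurd ⟨h, h'⟩ hniso
        · exact h'
      have h1' : (1 : ℝ) ≤ (kB b : ℝ) := by exact_mod_cast hkB1
      have h2' := mul_le_mul_of_nonneg_right h1' hLbb0.le
      have h0 : (kA b : ℝ) = 0 := by exact_mod_cast h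
      rw [h0]
      linarith
    · have h1' : (1 : ℝ) ≤ (kA b : ℝ) := by exact_mod_cast h
      have h2' := mul_le_mul_of_nonneg_right h1' hLab.le
      have h3' : (0 : ℝ) ≤ (kB b : ℝ) * Lbb := mul_nonneg (Nat.cast_nonneg _) hLbb0.le
      linarith
  have hψle : ∀ b ∈ Aᶜ, psiSum A f c δ g b ≤ ψstar := by
    intro b hb
    by_cases hiso : kA b = 0 ∧ kB b = 0
    · rw [hψiso b hb hiso.1 hiso.2]; linarith
    · have hSa := Finset.sum_le_sum (fun a ha => hABle b hb a ha)
      rw [hSaB b] at hSa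
      have hSb := Finset.sum_le_sum (fun b' hb' => hBBle b hb b' hb')
      rw [hSbB b hb] at hSb
      have hcredit := hcreditAll b hiso
      unfold psiSum
      linarith
  -- total bound
  have hS1 : (∑ a ∈ A, ∑ a' ∈ A, sval f c δ g a a') ≤ nα * (nα - 1) * (fα - c) :=
    calc (∑ a ∈ A, ∑ a' ∈ A, sval f c δ g a a')
        ≤ ∑ a ∈ A, ∑ a' ∈ A, (if a = a' then 0 else fα - c) :=
          Finset.sum_le_sum fun a ha => Finset.sum_le_sum fun a' ha' => hAAle a ha a' ha'
      _ = nα * (nα - 1) * (fα - c) := sum_sum_offdiag A (fα - c)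
  have hS2 : (∑ b ∈ Aᶜ, psiSum A f c δ g b) ≤ nβ * ψstar :=
    calc (∑ b ∈ Aᶜ, psiSum A f c δ g b) ≤ ∑ _b ∈ Aᶜ, ψstar := Finset.sum_le_sum hψle
      _ = nβ * ψstar := by rw [Finset.sum_const, nsmul_eq_mul]
  have hTid : Tval A fα fβ c δ = nα * (nα - 1) * (fα - c) + nβ * ψstar := by
    rw [hψdef, hLabdef, hFdef, hnα, hnβ]
    unfold Tval
    ring
  have hdecomp := totalPayoff_decomp A f c δ g
  constructor
  · rw [hdecomp, hTid]; linarith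
  · intro htot
    rw [hdecomp, hTid] at htot
    have hSAA : (∑ a ∈ A, ∑ a' ∈ A, sval f c δ g a a') = nα * (nα - 1) * (fα - c) := by
      linarith
    have hψsum : (∑ b ∈ Aᶜ, psiSum A f c δ g b) = nβ * ψstar := by linarith
    -- the clique on A
    have hclique : ∀ a ∈ A, ∀ a' ∈ A, a ≠ a' → g.Adj a a' := by
      have houter := (Finset.sum_eq_sum_iff_of_le
        (fun a (ha : a ∈ A) => Finset.sum_le_sum fun a' ha' => hAAle a ha a' ha')).mp
        (by rw [hSAA, sum_sum_offdiag])
      intro a ha a' ha' hne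
      have hpt := (Finset.sum_eq_sum_iff_of_le
        (fun a'' ha'' => hAAle a ha a'' ha'')).mp (houter a ha) a' ha'
      rw [if_neg hne] at hpt
      exact hAAeq a ha a' ha' hne hpt
    have hψeq : ∀ b ∈ Aᶜ, psiSum A f c δ g b = ψstar := by
      refine (Finset.sum_eq_sum_iff_of_le hψle).mp ?_
      rw [hψsum, Finset.sum_const, nsmul_eq_mul]
    -- structure of each β-agent
    have hstruct : ∀ b ∈ Aᶜ, (∀ b' ∈ Aᶜ, ¬ g.Adj b b') ∧ kA b = 1 ∧
        (∀ b' ∈ Aᶜ, b ≠ b' → g.Reachable b b' ∧ g.dist b b' = 2) := by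
      intro b hb
      have hψb : psiSum A f c δ g b = ψstar := hψeq b hb
      have hψb' : 2 * (∑ a ∈ A, sval f c δ g a b) + (∑ b' ∈ Aᶜ, sval f c δ g b b')
          = ψstar := hψb
      have hniso : ¬ (kA b = 0 ∧ kB b = 0) := by
        rintro ⟨h0A, h0B⟩
        rw [hψiso b hb h0A h0B] at hψb
        linarith
      have hSa := Finset.sum_le_sum (fun a ha => hABle b hb a ha)
      rw [hSaB b] at hSa
      have hSb := Finset.sum_le_sum (fun b' hb' => hBBle b hb b' hb')
      rw [hSbB b hb] at hSb
      have hcredit := hcreditAll b hniso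
      have e1 : (∑ a ∈ A, sval f c δ g a b) = nα * (δ * F) - (kA b : ℝ) * Lab := by
        linarith
      have e2 : (∑ b' ∈ Aᶜ, sval f c δ g b b') = (nβ - 1) * (δ * fβ) - (kB b : ℝ) * Lbb := by
        linarith
      have e3 : 2 * (kA b : ℝ) * Lab + (kB b : ℝ) * Lbb = 2 * Lab := by linarith
      have hkB0 : kB b = 0 := by
        by_contra h
        have h1' : (1 : ℝ) ≤ (kB b : ℝ) := by exact_mod_cast Nat.pos_of_ne_zero h
        have h2' := mul_le_mul_of_nonneg_right h1' hLbb0.le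
        have h0' : (0 : ℝ) ≤ 2 * (kA b : ℝ) * Lab := by positivity
        linarith
      have hkA1 : kA b = 1 := by
        have h0' : (kB b : ℝ) = 0 := by rw [hkB0]; norm_num
        have h4' : (kA b : ℝ) * Lab = 1 * Lab := by rw [h0'] at e3; linarith
        have h5' : (kA b : ℝ) = 1 := mul_right_cancel₀ (ne_of_gt hLab) h4'
        exact_mod_cast h5'
      have hpt2 : ∀ b' ∈ Aᶜ, sval f c δ g b b'
          = (if b = b' then 0 else δ * fβ) - (if g.Adj b b' then Lbb else 0) :=
        (Finset.sum_eq_sum_iff_of_le (fun b' hb' => hBBle b hb b' hb')).mp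
          (by rw [e2, hSbB b hb])
      have hnoadjB : ∀ b' ∈ Aᶜ, ¬ g.Adj b b' := by
        intro b' hb' hadj
        have hmem : b' ∈ Aᶜ.filter (fun b' => g.Adj b b') :=
          Finset.mem_filter.mpr ⟨hb', hadj⟩
        rw [Finset.card_eq_zero.mp hkB0] at hmem
        simp at hmem
      refine ⟨hnoadjB, hkA1, ?_⟩
      intro b' hb' hne
      have hpt := hpt2 b' hb'
      rw [if_neg hne, if_neg (hnoadjB b' hb'), sub_zero] at hpt
      exact dist_two_of_sval_eq (f := f) (c := c) hδ0 hδ1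
        (by rw [hfb b hb, hfb b' hb']; linarith) hne (hnoadjB b' hb')
        (by rw [hpt, hfb b hb, hfb b' hb']; ring)
    -- the unique α-neighbour of each β-agent
    have hnbr : ∀ b ∈ Aᶜ, ∃ a₀, a₀ ∈ A ∧ g.Adj a₀ b ∧ ∀ a ∈ A, g.Adj a b → a = a₀ := by
      intro b hb
      obtain ⟨a₀, ha₀⟩ := Finset.card_eq_one.mp (hstruct b hb).2.1
      have hmem : a₀ ∈ A.filter (fun a => g.Adj a b) := by
        rw [ha₀]; exact Finset.mem_singleton_self a₀
      refine ⟨a₀, (Finset.mem_filter.mp hmem).1, (Finset.mem_filter.mp hmem).2, ?_⟩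
      intro a ha hadj
      have hmem' : a ∈ A.filter (fun a => g.Adj a b) := Finset.mem_filter.mpr ⟨ha, hadj⟩
      rw [ha₀] at hmem'
      exact Finset.mem_singleton.mp hmem'
    obtain ⟨b₀, hb₀⟩ := Finset.card_pos.mp hB
    obtain ⟨i₀, hi₀A, hi₀adj, huniq₀⟩ := hnbr b₀ hb₀
    have hallb : ∀ b ∈ Aᶜ, g.Adj i₀ b ∧ ∀ a ∈ A, g.Adj a b → a = i₀ := by
      intro b hb
      obtain ⟨ab, habA, habadj, huniqb⟩ := hnbr b hb
      have hab_eq : ab = i₀ := by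
        by_cases hbb : b = b₀
        · subst hbb; exact huniq₀ ab habA habadj
        · obtain ⟨hr, hd⟩ := (hstruct b hb).2.2 b₀ hb₀ hbb
          obtain ⟨x, hbx, hxb₀⟩ := exists_mid_of_dist_two hr hd
          have hxA : x ∈ A := by
            by_contra hxA
            exact (hstruct b hb).1 x (Finset.mem_compl.mpr hxA) hbx
          rw [← huniqb x hxA hbx.symm]
          exact huniq₀ x hxA hxb₀
      subst hab_eq
      exact ⟨habadj, huniqb⟩
    refine ⟨i₀, hi₀A, ?_⟩
    ext i j
    rw [coreStar_adj_iff]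
    constructor
    · intro hadj
      refine ⟨hadj.ne, ?_⟩
      by_cases hiA : i ∈ A <;> by_cases hjA : j ∈ A
      · exact Or.inl ⟨hiA, hjA⟩
      · exact Or.inr (Or.inl ⟨(hallb j (Finset.mem_compl.mpr hjA)).2 i hiA hadj, hjA⟩)
      · exact Or.inr (Or.inr ⟨(hallb i (Finset.mem_compl.mpr hiA)).2 j hjA hadj.symm, hiA⟩)
      · exact absurd hadj
          ((hstruct i (Finset.mem_compl.mpr hiA)).1 j (Finset.mem_compl.mpr hjA))
    · rintro ⟨hne, (⟨hiA, hjA⟩ | ⟨hii, hjA⟩ | ⟨hjj, hiA⟩)⟩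
      · exact hclique i hiA j hjA hne
      · subst hii; exact (hallb j (Finset.mem_compl.mpr hjA)).1
      · subst hjj; exact ((hallb i (Finset.mem_compl.mpr hiA)).1).symm

end Thm2cAux

/-- Theorem 2(c): a network is strongly efficient iff it is the clique on the
type-α agents together with links from a single type-α agent to every type-β agent. -/
theorem thm2c {I : Type*} [Fintype I] [DecidableEq I]
    (A : Finset I) (fα fβ c δ : ℝ)
    (hA : 1 ≤ A.card) (hB : 1 ≤ Aᶜ.card)
    (hfαβ : fβ < fα) (hfβ : 0 < fβ) (hc : 0 < c)
    (hδ0 : 0 < δ) (hδ1 : δ < 1)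
    (h1 : (1 - δ) * fα > c) (h2 : c > (1 - δ) * ((fα + fβ) / 2))
    (h3 : (1 + δ * ((A.card : ℝ) - 1)) * fα + (1 + δ * ((A.card : ℝ) + (Aᶜ.card : ℝ) - 2)) * fβ > 2 * c) :
    ∀ g : SimpleGraph I,
      StronglyEfficient (fTheta A fα fβ) c δ g ↔ ∃ i₀ ∈ A, g = coreStar A i₀ := by
  intro g
  have key := fun g' : SimpleGraph I =>
    key_bound A fα fβ c δ hA hB hfαβ hfβ hδ0 hδ1 h1 h2 h3 g'
  constructor
  · intro hSE
    obtain ⟨a₀, ha₀⟩ := Finset.card_pos.mp hA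
    have hcs := coreStar_totalPayoff A fα fβ c δ ha₀
    have hge : Tval A fα fβ c δ ≤ totalPayoff (fTheta A fα fβ) c δ g := by
      rw [← hcs]; exact hSE (coreStar A a₀)
    exact (key g).2 (le_antisymm (key g).1 hge)
  · rintro ⟨i₀, hi₀, rfl⟩ g'
    rw [coreStar_totalPayoff A fα fβ c δ hi₀]
    exact (key g').1
end
end

section
/- Proposition 4(a): If (1−δ)·f_β > c, then the maximum over all networks g on I of u_i(g) equals (n_α−1)·f_α + n_β·f_β − (n_α+n_β−1)·c when i is a type-α agent, and equals n_α·f_α + (n_β−1)·f_β − (n_α+n_β−1)·c when i is a type-β agent; in both cases the maximum is attained (e.g. by the complete graph). -/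
open Finset

noncomputable section

open scoped Classical

variable {I : Type*}

section Aux

variable {I : Type*} [Fintype I] [DecidableEq I]

lemma payoff_eq_sum (g : SimpleGraph I) (f : I → ℝ) (c δ : ℝ) (i : I) :
    payoff f c δ g i = ∑ j ∈ univ.erase i,
      ((if g.Reachable i j then δ ^ (g.dist i j - 1) * f j else 0)
        - (if g.Adj i j then c else 0)) := by
  unfold payoff
  rw [Finset.sum_filter]
  have hc : ((univ.filter fun j => g.Adj i j).card : ℝ) * c
      = ∑ j : I, if g.Adj i j then c else 0 := by
    rw [Finset.sum_ite, Finset.sum_const, Finset.sum_const, smul_zero, add_zero, nsmul_eq_mul]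
  rw [hc, ← Finset.sum_sub_distrib, ← Finset.add_sum_erase _ _ (Finset.mem_univ i)]
  rw [if_neg (show ¬(i ≠ i ∧ g.Reachable i i) from fun hq => hq.1 rfl),
    if_neg (g.irrefl (v := i)), sub_zero, zero_add]
  refine Finset.sum_congr rfl fun j hj => ?_
  have hji : j ≠ i := (Finset.mem_erase.mp hj).1
  by_cases hre : g.Reachable i j <;> simp [hji, hre]

lemma payoff_le (A : Finset I) (fα fβ c δ : ℝ)
    (hfαβ : fβ < fα) (hfβ : 0 < fβ) (hδ0 : 0 < δ) (hδ1 : δ < 1)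
    (h : (1 - δ) * fβ > c) (g : SimpleGraph I) (i : I) :
    payoff (fTheta A fα fβ) c δ g i
      ≤ ∑ j ∈ univ.erase i, fTheta A fα fβ j - ((univ.erase i).card : ℝ) * c := by
  rw [payoff_eq_sum]
  have hcs : ((univ.erase i).card : ℝ) * c = ∑ _j ∈ univ.erase i, c := by
    rw [Finset.sum_const, nsmul_eq_mul]
  rw [hcs, ← Finset.sum_sub_distrib]
  apply Finset.sum_le_sum
  intro j hj
  have hji : j ≠ i := (Finset.mem_erase.mp hj).1
  have hfj : fβ ≤ fTheta A fα fβ j := by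
    unfold fTheta; split
    · linarith
    · exact le_rfl
  have hcf : c < fTheta A fα fβ j := by nlinarith
  by_cases hadj : g.Adj i j
  · have hd : g.dist i j = 1 := SimpleGraph.dist_eq_one_iff_adj.mpr hadj
    rw [if_pos hadj, if_pos hadj.reachable, hd]
    simp
  · rw [if_neg hadj, sub_zero]
    by_cases hre : g.Reachable i j
    · rw [if_pos hre]
      have hd0 : g.dist i j ≠ 0 := fun h0 => hji (hre.dist_eq_zero_iff.mp h0).symm
      have hd1 : g.dist i j ≠ 1 := fun hd =>
        hadj (SimpleGraph.dist_eq_one_iff_adj.mp hd)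
      have hd2 : 1 ≤ g.dist i j - 1 := by omega
      have hpow : δ ^ (g.dist i j - 1) ≤ δ := by
        calc δ ^ (g.dist i j - 1) ≤ δ ^ 1 :=
              pow_le_pow_of_le_one hδ0.le hδ1.le hd2
          _ = δ := pow_one δ
      have hm : δ ^ (g.dist i j - 1) * fTheta A fα fβ j ≤ δ * fTheta A fα fβ j :=
        mul_le_mul_of_nonneg_right hpow (by linarith)
      nlinarith
    · rw [if_neg hre]
      linarith

lemma payoff_top (f : I → ℝ) (c δ : ℝ) (i : I) :
    payoff f c δ (⊤ : SimpleGraph I) i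
      = ∑ j ∈ univ.erase i, f j - ((univ.erase i).card : ℝ) * c := by
  rw [payoff_eq_sum]
  have hcs : ((univ.erase i).card : ℝ) * c = ∑ _j ∈ univ.erase i, c := by
    rw [Finset.sum_const, nsmul_eq_mul]
  rw [hcs, ← Finset.sum_sub_distrib]
  refine Finset.sum_congr rfl fun j hj => ?_
  have hji : j ≠ i := (Finset.mem_erase.mp hj).1
  have hadj : (⊤ : SimpleGraph I).Adj i j := by simpa using hji.symm
  have hd : (⊤ : SimpleGraph I).dist i j = 1 := SimpleGraph.dist_eq_one_iff_adj.mpr hadj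
  rw [if_pos hadj.reachable, if_pos hadj, hd]
  simp

lemma sum_fTheta (A : Finset I) (fα fβ : ℝ) :
    ∑ j, fTheta A fα fβ j = A.card * fα + Aᶜ.card * fβ := by
  unfold fTheta
  rw [Finset.sum_ite, Finset.sum_const, Finset.sum_const, Finset.filter_univ_mem]
  simp [Finset.filter_not, Finset.compl_eq_univ_sdiff, mul_comm]

end Aux

/-- Proposition 4(a): if `(1−δ)·fβ > c`, the attained maximum one-period payoff
of an agent over all networks. -/

theorem prop4a {I : Type*} [Fintype I] [DecidableEq I]
    (A : Finset I) (fα fβ c δ : ℝ)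
    (hA : 1 ≤ A.card) (hB : 1 ≤ Aᶜ.card)
    (hfαβ : fβ < fα) (hfβ : 0 < fβ) (hc : 0 < c)
    (hδ0 : 0 < δ) (hδ1 : δ < 1)
    (h : (1 - δ) * fβ > c) :
    (∀ i ∈ A, IsGreatest (Set.range fun g : SimpleGraph I => payoff (fTheta A fα fβ) c δ g i)
      (((A.card : ℝ) - 1) * fα + (Aᶜ.card : ℝ) * fβ - ((A.card : ℝ) + (Aᶜ.card : ℝ) - 1) * c)) ∧
    (∀ i ∉ A, IsGreatest (Set.range fun g : SimpleGraph I => payoff (fTheta A fα fβ) c δ g i)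
      ((A.card : ℝ) * fα + ((Aᶜ.card : ℝ) - 1) * fβ - ((A.card : ℝ) + (Aᶜ.card : ℝ) - 1) * c)) := by

  have hcard : (A.card : ℝ) + (Aᶜ.card : ℝ) = (Fintype.card I : ℝ) := by
    rw [← Nat.cast_add, Finset.card_add_card_compl]
  have hItot : 1 ≤ Fintype.card I := by
    have := Finset.card_le_card (Finset.subset_univ A)
    simp only [Finset.card_univ] at this
    omega
  have hecard : ∀ i : I, ((univ.erase i).card : ℝ)
      = (A.card : ℝ) + (Aᶜ.card : ℝ) - 1 := by
    intro i
    rw [Finset.card_erase_of_mem (Finset.mem_univ i), Finset.card_univ,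
      Nat.cast_sub hItot, Nat.cast_one, hcard]
  have hesum : ∀ i : I, ∑ j ∈ univ.erase i, fTheta A fα fβ j
      = (A.card : ℝ) * fα + (Aᶜ.card : ℝ) * fβ - fTheta A fα fβ i := by
    intro i
    rw [Finset.sum_erase_eq_sub (Finset.mem_univ i), sum_fTheta]
  constructor
  · intro i hi
    have hval : ∑ j ∈ univ.erase i, fTheta A fα fβ j - ((univ.erase i).card : ℝ) * c
        = ((A.card : ℝ) - 1) * fα + (Aᶜ.card : ℝ) * fβ
            - ((A.card : ℝ) + (Aᶜ.card : ℝ) - 1) * c := by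
      rw [hesum i, hecard i]
      unfold fTheta
      rw [if_pos hi]
      ring
    constructor
    · exact ⟨⊤, by show payoff (fTheta A fα fβ) c δ ⊤ i = _; rw [payoff_top, hval]⟩
    · rintro x ⟨g, rfl⟩
      show payoff (fTheta A fα fβ) c δ g i ≤ _
      rw [← hval]
      exact payoff_le A fα fβ c δ hfαβ hfβ hδ0 hδ1 h g i
  · intro i hi
    have hval : ∑ j ∈ univ.erase i, fTheta A fα fβ j - ((univ.erase i).card : ℝ) * c
        = (A.card : ℝ) * fα + ((Aᶜ.card : ℝ) - 1) * fβ
            - ((A.card : ℝ) + (Aᶜ.card : ℝ) - 1) * c := by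
      rw [hesum i, hecard i]
      unfold fTheta
      rw [if_neg hi]
      ring
    constructor
    · exact ⟨⊤, by show payoff (fTheta A fα fβ) c δ ⊤ i = _; rw [payoff_top, hval]⟩
    · rintro x ⟨g, rfl⟩
      show payoff (fTheta A fα fβ) c δ g i ≤ _
      rw [← hval]
      exact payoff_le A fα fβ c δ hfαβ hfβ hδ0 hδ1 h g i
end
end

section
/- Proposition 4(c): Suppose n_α ≥ 2 and min{ f_α + δ·((n_α−2)·f_α + n_β·f_β), f_α + δ·((n_α−1)·f_α + (n_β−1)·f_β) } > c > (1−δ)·f_α. Then the maximum over all networks g on I of u_i(g) equals f_α + δ·((n_α−2)·f_α + n_β·f_β) − c when i is a type-α agent, and equals f_α + δ·((n_α−1)·f_α + (n_β−1)·f_β) − c when i is a type-β agent; in both cases the maximum is attained (e.g. when i is a periphery agent of a star with a type-α center). -/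
open Finset

noncomputable section

open scoped Classical

variable {I : Type*}

lemma sum_fTheta_univ [Fintype I] [DecidableEq I] (A : Finset I) (fα fβ : ℝ) :
    ∑ j, fTheta A fα fβ j = (A.card : ℝ) * fα + (Aᶜ.card : ℝ) * fβ := by
  rw [show (fun j => fTheta A fα fβ j) = fun j => if j ∈ A then fα else fβ from rfl]
  rw [Finset.sum_ite]
  simp [Finset.filter_mem_eq_inter, Finset.univ_inter, mul_comm, Finset.filter_not,
    Finset.compl_eq_univ_sdiff]

lemma payoff_starAll [Fintype I] (f : I → ℝ) (c δ : ℝ) (i j₀ : I) (hne : i ≠ j₀) :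
    payoff f c δ (starAll j₀) i
      = f j₀ + δ * ((∑ j, f j) - f i - f j₀) - c := by
  classical
  have hj₀m : j₀ ∈ univ.erase i := mem_erase.2 ⟨Ne.symm hne, mem_univ _⟩
  have e1 : ∑ j ∈ (univ.erase i).erase j₀, f j + f j₀ = ∑ j ∈ univ.erase i, f j :=
    Finset.sum_erase_add _ _ hj₀m
  have e2 : ∑ j ∈ univ.erase i, f j + f i = ∑ j, f j :=
    Finset.sum_erase_add _ _ (mem_univ i)
  have e3 : ∑ j ∈ (univ.erase i).erase j₀, f j = (∑ j, f j) - f i - f j₀ := by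
    linarith
  rw [← e3]
  have hadj : ∀ j, (starAll j₀).Adj i j ↔ j = j₀ := by
    intro j
    constructor
    · rintro ⟨h1, h2 | h2⟩
      · exact absurd h2 hne
      · exact h2
    · rintro rfl; exact ⟨hne, Or.inr rfl⟩
  have hij₀ : (starAll j₀).Adj i j₀ := (hadj j₀).2 rfl
  have hreach : ∀ j, j ≠ i → (starAll j₀).Reachable i j := by
    intro j hj
    by_cases hjj : j = j₀
    · subst hjj; exact hij₀.reachable
    · exact hij₀.reachable.trans (SimpleGraph.Adj.reachable ⟨Ne.symm hjj, Or.inl rfl⟩)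
  have hfilt : (univ.filter fun j => j ≠ i ∧ (starAll j₀).Reachable i j) = univ.erase i := by
    ext j; simp only [mem_filter, mem_univ, true_and, mem_erase]
    exact ⟨fun h => ⟨h.1, trivial⟩, fun h => ⟨h.1, hreach j h.1⟩⟩
  have hN : (univ.filter fun j => (starAll j₀).Adj i j) = {j₀} := by
    ext j; simp [hadj j]
  have hdist1 : (starAll j₀).dist i j₀ = 1 := SimpleGraph.dist_eq_one_iff_adj.2 hij₀
  have hdist2 : ∀ j, j ≠ i → j ≠ j₀ → (starAll j₀).dist i j = 2 := by
    intro j hji hjj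
    have hle : (starAll j₀).dist i j ≤ 2 := by
      have := SimpleGraph.dist_le
        (SimpleGraph.Walk.cons hij₀
          (SimpleGraph.Walk.cons ⟨Ne.symm hjj, Or.inl rfl⟩ SimpleGraph.Walk.nil))
      exact this
    have h0 : (starAll j₀).dist i j ≠ 0 :=
      SimpleGraph.dist_ne_zero_iff_ne_and_reachable.2 ⟨Ne.symm hji, hreach j hji⟩
    have h1 : (starAll j₀).dist i j ≠ 1 := by
      intro h
      have := SimpleGraph.dist_eq_one_iff_adj.1 h
      rw [hadj j] at this
      exact hjj this
    omega
  have hj₀mem : j₀ ∈ univ.erase i := mem_erase.2 ⟨Ne.symm hne, mem_univ _⟩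
  have hmain : ∑ j ∈ univ.erase i, δ ^ ((starAll j₀).dist i j - 1) * f j
      = f j₀ + δ * ∑ j ∈ (univ.erase i).erase j₀, f j := by
    rw [← Finset.add_sum_erase _ _ hj₀mem, hdist1]
    norm_num
    rw [Finset.mul_sum]
    refine Finset.sum_congr rfl ?_
    intro j hj
    rw [mem_erase, mem_erase] at hj
    rw [hdist2 j hj.2.1 hj.1]
    norm_num
  rw [payoff, hfilt, hN, hmain]
  simp only [Finset.card_singleton, Nat.cast_one, one_mul]

lemma payoff_le_s11 [Fintype I] (f : I → ℝ) (fα c δ : ℝ)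
    (hf0 : ∀ j, 0 < f j) (hfM : ∀ j, f j ≤ fα)
    (hδ0 : 0 < δ) (hδ1 : δ < 1) (hc : (1 - δ) * fα < c)
    (g : SimpleGraph I) (i : I)
    (hpos : 0 < δ * ((∑ j, f j) - f i) + (1 - δ) * fα - c) :
    payoff f c δ g i ≤ δ * ((∑ j, f j) - f i) + (1 - δ) * fα - c := by
  classical
  have e2 : ∑ j ∈ univ.erase i, f j + f i = ∑ j, f j :=
    Finset.sum_erase_add _ _ (mem_univ i)
  have e3 : ∑ j ∈ univ.erase i, f j = (∑ j, f j) - f i := by linarith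
  rw [← e3] at hpos ⊢
  set N := univ.filter fun j => g.Adj i j with hNdef
  set R := univ.filter (fun j => j ≠ i ∧ g.Reachable i j) with hRdef
  rcases Finset.eq_empty_or_nonempty N with hNe | hNne
  · -- no neighbors: R is empty, payoff = 0
    have hRe : R = ∅ := by
      rw [Finset.eq_empty_iff_forall_notMem]
      intro j hj
      rw [hRdef, mem_filter] at hj
      obtain ⟨-, hji, hr⟩ := hj
      rcases hr with ⟨p⟩
      cases p with
      | nil => exact hji rfl
      | cons h q =>
        have hv := Finset.mem_filter.2 ⟨Finset.mem_univ _, h⟩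
        rw [← hNdef, hNe] at hv
        exact absurd hv (Finset.notMem_empty _)
    rw [payoff, ← hRdef, ← hNdef, hRe, hNe]
    simpa using le_of_lt hpos
  · have hNsubR : N ⊆ R := by
      intro j hj
      rw [hNdef, mem_filter] at hj
      rw [hRdef, mem_filter]
      exact ⟨mem_univ _, (g.ne_of_adj hj.2).symm, hj.2.reachable⟩
    have hRsub : R ⊆ univ.erase i := by
      intro j hj
      rw [hRdef, mem_filter] at hj
      exact mem_erase.2 ⟨hj.2.1, mem_univ _⟩
    have hsplit : ∑ j ∈ R \ N, δ ^ (g.dist i j - 1) * f j + ∑ j ∈ N, δ ^ (g.dist i j - 1) * f j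
        = ∑ j ∈ R, δ ^ (g.dist i j - 1) * f j := Finset.sum_sdiff hNsubR
    have hNterm : ∀ j ∈ N, δ ^ (g.dist i j - 1) * f j = f j := by
      intro j hj
      rw [hNdef, mem_filter] at hj
      rw [SimpleGraph.dist_eq_one_iff_adj.2 hj.2]
      simp
    have hRNterm : ∀ j ∈ R \ N, δ ^ (g.dist i j - 1) * f j ≤ δ * f j := by
      intro j hj
      rw [Finset.mem_sdiff, hRdef, mem_filter, hNdef, mem_filter] at hj
      obtain ⟨⟨-, hji, hr⟩, hnadj⟩ := hj
      have hd0 : g.dist i j ≠ 0 :=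
        SimpleGraph.dist_ne_zero_iff_ne_and_reachable.2 ⟨Ne.symm hji, hr⟩
      have hd1 : g.dist i j ≠ 1 := by
        intro h
        exact hnadj ⟨mem_univ _, SimpleGraph.dist_eq_one_iff_adj.1 h⟩
      have hd2 : 1 ≤ g.dist i j - 1 := by omega
      have : δ ^ (g.dist i j - 1) ≤ δ ^ 1 :=
        pow_le_pow_of_le_one (le_of_lt hδ0) (le_of_lt hδ1) hd2
      rw [pow_one] at this
      exact mul_le_mul_of_nonneg_right this (le_of_lt (hf0 j))
    -- payoff = ∑_N f j + ∑_{R\N} ... - |N| c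
    rw [payoff, ← hRdef, ← hNdef, ← hsplit]
    rw [Finset.sum_congr rfl hNterm]
    have key1 : ∑ j ∈ R \ N, δ ^ (g.dist i j - 1) * f j ≤ δ * ∑ j ∈ R \ N, f j := by
      rw [Finset.mul_sum]; exact Finset.sum_le_sum hRNterm
    have key2 : ∑ j ∈ N, f j - (N.card : ℝ) * c
        ≤ δ * ∑ j ∈ N, f j + ((1 - δ) * fα - c) := by
      have heach : ∀ j ∈ N, (1 - δ) * f j - c ≤ (1 - δ) * fα - c := by
        intro j _
        have := mul_le_mul_of_nonneg_left (hfM j) (by linarith : (0:ℝ) ≤ 1 - δ)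
        linarith
      have hsumc : ∑ j ∈ N, ((1 - δ) * f j - c) ≤ (N.card : ℝ) * ((1 - δ) * fα - c) :=
        calc ∑ j ∈ N, ((1 - δ) * f j - c) ≤ ∑ j ∈ N, ((1 - δ) * fα - c) :=
              Finset.sum_le_sum heach
          _ = (N.card : ℝ) * ((1 - δ) * fα - c) := by rw [Finset.sum_const, nsmul_eq_mul]
      have hcard1 : (1 : ℝ) ≤ (N.card : ℝ) := by
        exact_mod_cast Finset.card_pos.2 hNne
      have hneg : (1 - δ) * fα - c ≤ 0 := by linarith
      have hsum2 : ∑ j ∈ N, ((1 - δ) * f j - c) ≤ (1 - δ) * fα - c := by nlinarith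
      have hid : ∑ j ∈ N, f j - (N.card : ℝ) * c
          = δ * ∑ j ∈ N, f j + ∑ j ∈ N, ((1 - δ) * f j - c) := by
        rw [Finset.sum_sub_distrib, Finset.sum_const, nsmul_eq_mul, ← Finset.mul_sum]
        ring
      linarith
    have hRsum : ∑ j ∈ R \ N, f j + ∑ j ∈ N, f j = ∑ j ∈ R, f j := Finset.sum_sdiff hNsubR
    have hRle : ∑ j ∈ R, f j ≤ ∑ j ∈ univ.erase i, f j :=
      Finset.sum_le_sum_of_subset_of_nonneg hRsub (fun j _ _ => le_of_lt (hf0 j))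
    have := mul_le_mul_of_nonneg_left hRle (le_of_lt hδ0)
    nlinarith [key1, key2]

lemma isGreatest_aux [Fintype I] [DecidableEq I] (A : Finset I) (fα fβ c δ : ℝ)
    (hfαβ : fβ < fα) (hfβ : 0 < fβ)
    (hδ0 : 0 < δ) (hδ1 : δ < 1) (hc2 : (1 - δ) * fα < c)
    (i j₀ : I) (hj₀ : j₀ ∈ A) (hne : i ≠ j₀)
    (hpos : 0 < δ * ((∑ j, fTheta A fα fβ j) - fTheta A fα fβ i) + (1 - δ) * fα - c) :
    IsGreatest (Set.range fun g : SimpleGraph I => payoff (fTheta A fα fβ) c δ g i)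
      (δ * ((∑ j, fTheta A fα fβ j) - fTheta A fα fβ i) + (1 - δ) * fα - c) := by
  have hf0 : ∀ j, 0 < fTheta A fα fβ j := by
    intro j; unfold fTheta; split <;> linarith
  have hfM : ∀ j, fTheta A fα fβ j ≤ fα := by
    intro j; unfold fTheta; split <;> linarith
  constructor
  · refine ⟨starAll j₀, ?_⟩
    show payoff (fTheta A fα fβ) c δ (starAll j₀) i = _
    rw [payoff_starAll _ _ _ _ _ hne]
    have hfj₀ : fTheta A fα fβ j₀ = fα := by simp [fTheta, hj₀]
    rw [hfj₀]
    ring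
  · rintro x ⟨g, rfl⟩
    exact payoff_le_s11 _ fα c δ hf0 hfM hδ0 hδ1 hc2 g i hpos

/-- Proposition 4(c): the attained maximum one-period payoff of an agent over
all networks, in the periphery-of-a-star regime. -/
theorem prop4c {I : Type*} [Fintype I] [DecidableEq I]
    (A : Finset I) (fα fβ c δ : ℝ)
    (hA : 1 ≤ A.card) (hB : 1 ≤ Aᶜ.card)
    (hfαβ : fβ < fα) (hfβ : 0 < fβ) (hc : 0 < c)
    (hδ0 : 0 < δ) (hδ1 : δ < 1)
    (hA2 : 2 ≤ A.card)
    (h1 : min (fα + δ * (((A.card : ℝ) - 2) * fα + (Aᶜ.card : ℝ) * fβ))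
        (fα + δ * (((A.card : ℝ) - 1) * fα + ((Aᶜ.card : ℝ) - 1) * fβ)) > c)
    (h2 : c > (1 - δ) * fα) :
    (∀ i ∈ A, IsGreatest (Set.range fun g : SimpleGraph I => payoff (fTheta A fα fβ) c δ g i)
      (fα + δ * (((A.card : ℝ) - 2) * fα + (Aᶜ.card : ℝ) * fβ) - c)) ∧
    (∀ i ∉ A, IsGreatest (Set.range fun g : SimpleGraph I => payoff (fTheta A fα fβ) c δ g i)
      (fα + δ * (((A.card : ℝ) - 1) * fα + ((Aᶜ.card : ℝ) - 1) * fβ) - c)) := by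
  have hTot := sum_fTheta_univ A fα fβ
  have h1a : fα + δ * (((A.card : ℝ) - 2) * fα + (Aᶜ.card : ℝ) * fβ) > c :=
    lt_of_lt_of_le h1 (min_le_left _ _)
  have h1b : fα + δ * (((A.card : ℝ) - 1) * fα + ((Aᶜ.card : ℝ) - 1) * fβ) > c :=
    lt_of_lt_of_le h1 (min_le_right _ _)
  constructor
  · intro i hi
    have hfi : fTheta A fα fβ i = fα := by simp [fTheta, hi]
    have hval : δ * ((∑ j, fTheta A fα fβ j) - fTheta A fα fβ i) + (1 - δ) * fα - c
        = fα + δ * (((A.card : ℝ) - 2) * fα + (Aᶜ.card : ℝ) * fβ) - c := by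
      rw [hTot, hfi]; ring
    obtain ⟨j₀, hj₀A, hj₀i⟩ := Finset.exists_mem_ne (s := A) (by omega) i
    have := isGreatest_aux A fα fβ c δ hfαβ hfβ hδ0 hδ1 h2 i j₀ hj₀A (Ne.symm hj₀i)
      (by rw [hval]; linarith)
    rwa [hval] at this
  · intro i hi
    have hfi : fTheta A fα fβ i = fβ := by simp [fTheta, hi]
    have hval : δ * ((∑ j, fTheta A fα fβ j) - fTheta A fα fβ i) + (1 - δ) * fα - c
        = fα + δ * (((A.card : ℝ) - 1) * fα + ((Aᶜ.card : ℝ) - 1) * fβ) - c := by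
      rw [hTot, hfi]; ring
    obtain ⟨j₀, hj₀A⟩ := Finset.card_pos.1 (by omega : 0 < A.card)
    have hne : i ≠ j₀ := fun h => hi (h ▸ hj₀A)
    have := isGreatest_aux A fα fβ c δ hfαβ hfβ hδ0 hδ1 h2 i j₀ hj₀A hne
      (by rw [hval]; linarith)
    rwa [hval] at this
end
end
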